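/- Let R be a discrete valuation ring in which 2 is invertible, let t ∈ R be a uniformizer (a generator of the maximal ideal), and let a, b, c ∈ R be such that the discriminant Δ of the Weierstrass curve with coefficients (a₁, a₂, a₃, a₄, a₆) = (0, a, 0, b, c) (i.e. the curve y² = x³ + a·x² + b·x + c) is a unit in R. Then the ring R[u, v]/(v² − u³ − t²·a·u² − t⁴·b·u − t⁶·c) is an integral domain which is integrally closed in its field of fractions. -/

import Mathlib

open MvPolynomial in
/-- The Weierstrass relation `y² − x³ − a·x² − b·x − c` in the polynomial ring in two
variables `x = X 0`, `y = X 1`. -/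
noncomputable def wRel (A : Type*) [CommRing A] (a b c : A) : MvPolynomial (Fin 2) A :=
  X 1 ^ 2 - X 0 ^ 3 - C a * X 0 ^ 2 - C b * X 0 - C c

section Helpers

open Polynomial


/-- Transfer `IsIntegrallyClosed` along a ring equivalence. -/
theorem isIntegrallyClosed_of_ringEquiv {A B : Type*} [CommRing A] [CommRing B]
    (e : A ≃+* B) [IsIntegrallyClosed B] : IsIntegrallyClosed A := by
  let F := FractionRing B
  letI : Algebra A F := ((algebraMap B F).comp e.toRingHom).toAlgebra
  haveI hFR : IsFractionRing A F := by
    have := (IsFractionRing.isFractionRing_iff_of_base_ringEquiv (S := F) e.symm).mp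
      (inferInstance : IsFractionRing B F)
    convert this using 2 <;> rfl
  refine (isIntegrallyClosed_iff F).mpr ?_
  intro x hx
  have hxB : IsIntegral B x := by
    obtain ⟨p, hpm, hpe⟩ := hx
    refine ⟨p.map e.toRingHom, hpm.map _, ?_⟩
    rw [Polynomial.eval₂_map]
    exact hpe
  obtain ⟨y, hy⟩ := (isIntegrallyClosed_iff (R := B) F).mp ‹_› hxB
  exact ⟨e.symm y, by
    have : algebraMap A F (e.symm y) = algebraMap B F (e (e.symm y)) := rfl
    rw [this, e.apply_symm_apply, hy]⟩



/-- Descend squarefreeness along an injective map, for monic polynomials. -/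
theorem squarefree_of_map {R S : Type*} [CommRing R] [IsDomain R] [CommRing S] [IsDomain S]
    (φ : R →+* S) (hφ : Function.Injective φ) {f : R[X]} (hf : f.Monic)
    (h : Squarefree (f.map φ)) : Squarefree f := by
  intro g hg
  have hmap : g.map φ * g.map φ ∣ f.map φ := by
    rw [← Polynomial.map_mul]; exact Polynomial.map_dvd φ hg
  have hu : IsUnit (g.map φ) := h _ hmap
  have hdeg : g.natDegree = 0 := by
    have := Polynomial.natDegree_eq_zero_of_isUnit hu
    rwa [Polynomial.natDegree_map_eq_of_injective hφ] at this
  obtain ⟨r, rfl⟩ := Polynomial.natDegree_eq_zero.mp hdeg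
  rw [← Polynomial.C_mul] at hg
  obtain ⟨h', hh'⟩ := hg
  have : (1 : R) = r * r * h'.leadingCoeff := by
    have := congrArg leadingCoeff hh'
    rwa [hf.leadingCoeff, leadingCoeff_mul, leadingCoeff_C] at this
  have : r * (r * h'.leadingCoeff) = 1 := by rw [← mul_assoc]; exact this.symm
  exact Polynomial.isUnit_C.mpr (IsUnit.of_mul_eq_one _ this)

/-- In a UFD, if `c² · f` is integral with `f` squarefree, then `c` is integral. -/
theorem exists_eq_of_sq_mul_squarefree {P K : Type*} [CommRing P] [IsDomain P]
    [UniqueFactorizationMonoid P] [Field K] [Algebra P K] [IsFractionRing P K]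
    {f : P} (hsq : Squarefree f) {c : K} {p : P}
    (h : c ^ 2 * algebraMap P K f = algebraMap P K p) :
    ∃ n, algebraMap P K n = c := by
  obtain ⟨a, b, hab, rfl⟩ := IsFractionRing.exists_reduced_fraction P c
  have hbne : (b : P) ≠ 0 := nonZeroDivisors.coe_ne_zero b
  have hspec : IsLocalization.mk' K a b * algebraMap P K b = algebraMap P K a :=
    IsLocalization.mk'_spec K a b
  have key : a ^ 2 * f = p * (b : P) ^ 2 := by
    apply IsFractionRing.injective P K
    push_cast [map_mul, map_pow]
    rw [← hspec]
    ring_nf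
    rw [← h]
    ring
  -- b is a unit
  have hbu : IsUnit (b : P) := by
    by_contra hbnu
    obtain ⟨π, hπ, hπb⟩ := WfDvdMonoid.exists_irreducible_factor hbnu hbne
    have hπp : Prime π := UniqueFactorizationMonoid.irreducible_iff_prime.mp hπ
    have hπa : ¬ π ∣ a := fun hd => hπ.not_isUnit (hab hd hπb)
    have h2 : π * π ∣ a ^ 2 * f := by
      refine Dvd.dvd.trans (mul_dvd_mul hπb hπb) ?_
      rw [key]
      exact Dvd.dvd.mul_left (by rw [sq]) p
    have hπf : π ∣ f := by
      rcases hπp.dvd_mul.mp (dvd_trans (dvd_mul_right π π) h2) with h' | h'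
      · exact absurd (hπp.dvd_of_dvd_pow h') hπa
      · exact h'
    obtain ⟨f', rfl⟩ := hπf
    have h3 : π ∣ a ^ 2 * f' := by
      have : π * π ∣ π * (a ^ 2 * f') := by
        calc π * π ∣ a ^ 2 * (π * f') := h2
        _ = π * (a ^ 2 * f') := by ring
      exact (mul_dvd_mul_iff_left hπp.ne_zero).mp this
    have hπf' : π ∣ f' := by
      rcases hπp.dvd_mul.mp h3 with h' | h'
      · exact absurd (hπp.dvd_of_dvd_pow h') hπa
      · exact h'
    exact hπ.not_isUnit (hsq π (mul_dvd_mul_left π hπf'))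
  refine ⟨a * ↑hbu.unit⁻¹, ?_⟩
  have hb1 : (↑hbu.unit⁻¹ : P) * (b : P) = 1 := hbu.unit.inv_mul
  have hKb : algebraMap P K b ≠ 0 :=
    IsFractionRing.to_map_ne_zero_of_mem_nonZeroDivisors b.2
  apply mul_right_cancel₀ hKb
  rw [hspec, map_mul, mul_assoc, ← map_mul, hb1, map_one, mul_one]




/-- A monic cubic with nonzero discriminant is squarefree. -/
theorem cubic_squarefree_of_disc_ne_zero {R : Type*} [CommRing R] [IsDomain R]
    (P : Cubic R) (ha : P.a = 1) (hd : P.discr ≠ 0) : Squarefree P.toPoly := by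
  classical
  let K₀ := FractionRing R
  let Ω := AlgebraicClosure K₀
  let φ : R →+* Ω := (algebraMap K₀ Ω).comp (algebraMap R K₀)
  have hφ : Function.Injective φ := fun u v h =>
    IsFractionRing.injective R K₀ ((algebraMap K₀ Ω).injective h)
  have hmonic : P.toPoly.Monic := by
    have := Cubic.leadingCoeff_of_a_ne_zero (P := P) (by rw [ha]; exact one_ne_zero)
    rw [Monic, this, ha]
  refine squarefree_of_map φ hφ hmonic ?_
  -- the cubic over K₀
  set Q : Cubic K₀ := Cubic.map (algebraMap R K₀) P with hQ
  have hQa : Q.a = 1 := by simp [hQ, Cubic.map, ha]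
  have hQa' : Q.a ≠ 0 := by rw [hQa]; exact one_ne_zero
  let φ' := algebraMap K₀ Ω
  have hsplits : Splits (Q.toPoly.map φ') := IsAlgClosed.splits _
  obtain ⟨x, y, z, h3⟩ := (Cubic.splits_iff_roots_eq_three hQa').mp hsplits
  have hQd : Q.discr ≠ 0 := by
    have h5 : Q.discr = algebraMap R K₀ P.discr := by
      simp [hQ, Cubic.discr, Cubic.map, map_mul, map_sub, map_add, map_pow, map_ofNat]
    rw [h5]
    exact fun h => hd (IsFractionRing.injective R K₀ (by rwa [map_zero]))
  obtain ⟨hxy, hxz, hyz⟩ := (Cubic.discr_ne_zero_iff_roots_ne hQa' h3).mp hQd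
  -- factorization
  have hfact : P.toPoly.map φ = (X - C x) * ((X - C y) * (X - C z)) := by
    have h6 := Cubic.eq_prod_three_roots hQa' h3
    rw [Cubic.map_toPoly, hQ, Cubic.map_toPoly, Polynomial.map_map] at h6
    rw [show φ = φ'.comp (algebraMap R K₀) from rfl, ← Polynomial.map_map]
    rw [Polynomial.map_map] at *
    rwa [hQa, map_one, C_1, one_mul, mul_assoc] at h6
  rw [hfact]
  refine Polynomial.Separable.squarefree ?_
  refine Polynomial.Separable.mul (separable_X_sub_C) (Polynomial.Separable.mul
    (separable_X_sub_C) (separable_X_sub_C) ?_) ?_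
  · exact Polynomial.isCoprime_X_sub_C_of_isUnit_sub ((sub_ne_zero.mpr hyz).isUnit)
  · exact IsCoprime.mul_right
      (Polynomial.isCoprime_X_sub_C_of_isUnit_sub ((sub_ne_zero.mpr hxy).isUnit))
      (Polynomial.isCoprime_X_sub_C_of_isUnit_sub ((sub_ne_zero.mpr hxz).isUnit))




set_option maxHeartbeats 1000000 in
/-- The central lemma: for a UFD `P` with `2` invertible, `f` squarefree and not a square
in the fraction field, `P[Y]/(Y² - f)` is an integrally closed domain. -/
theorem quad_adjoinRoot {P : Type*} [CommRing P] [IsDomain P] [UniqueFactorizationMonoid P]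
    (h2 : IsUnit (2 : P)) (f : P) (hsq : Squarefree f)
    (hns : ∀ u v : P, u ^ 2 = f * v ^ 2 → v = 0) :
    IsDomain (AdjoinRoot (X ^ 2 - C f : P[X])) ∧
    IsIntegrallyClosed (AdjoinRoot (X ^ 2 - C f : P[X])) := by
  classical
  set q : P[X] := X ^ 2 - C f with hq
  have hqm : q.Monic := monic_X_pow_sub_C f (by norm_num)
  set K := FractionRing P with hK
  set qK : K[X] := q.map (algebraMap P K) with hqKdef
  have hqK_eq : qK = X ^ 2 - C (algebraMap P K f) := by
    simp [hqKdef, hq, Polynomial.map_sub, Polynomial.map_pow]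
  have hqKm : qK.Monic := hqm.map _
  have hqKnd : qK.natDegree = 2 := by
    rw [hqK_eq]; exact natDegree_X_pow_sub_C
  have hqKdeg : qK.degree = 2 := by
    rw [degree_eq_natDegree hqKm.ne_zero, hqKnd]; rfl
  have hdeg_le : ∀ p : K[X], p.degree < 2 → p.degree ≤ 1 := by
    intro p hp
    by_cases h0 : p = 0
    · simp [h0]
    · have h1 : p.natDegree < 2 := (Polynomial.natDegree_lt_iff_degree_lt h0).mpr hp
      have h2 : p.natDegree ≤ 1 := by omega
      exact_mod_cast Polynomial.degree_le_of_natDegree_le h2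
  -- qK is irreducible: no roots
  have hirrK : Irreducible qK := by
    rw [hqKm.irreducible_iff_roots_eq_zero_of_degree_le_three (by omega) (by omega)]
    refine Multiset.eq_zero_of_forall_notMem fun r hr => ?_
    have hroot : qK.IsRoot r := (mem_roots hqKm.ne_zero).mp hr
    have hr2 : r ^ 2 = algebraMap P K f := by
      have h' : Polynomial.eval r qK = Polynomial.eval r (X ^ 2 - C (algebraMap P K f)) :=
        congrArg (Polynomial.eval r) hqK_eq
      have := hroot
      rw [IsRoot, h'] at this
      simpa [sub_eq_zero] using this
    obtain ⟨⟨u, v⟩, hs⟩ := IsLocalization.surj (nonZeroDivisors P) r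
    simp only at hs
    have hv : (v : P) ≠ 0 := nonZeroDivisors.coe_ne_zero v
    have : u ^ 2 = f * (v : P) ^ 2 := by
      apply IsFractionRing.injective P K
      rw [map_pow, ← hs, map_mul, map_pow, mul_pow, hr2]
    exact hv (hns u v this)
  have hirr : Irreducible q :=
    (hqm.irreducible_iff_irreducible_map_fraction_map (K := K)).mpr hirrK
  haveI hdom : IsDomain (AdjoinRoot q) :=
    AdjoinRoot.isDomain_of_prime (UniqueFactorizationMonoid.irreducible_iff_prime.mp hirr)
  refine ⟨hdom, ?_⟩
  -- the quadratic field extension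
  haveI : Fact (Irreducible qK) := ⟨hirrK⟩
  set L := AdjoinRoot qK with hL
  set ρ : L := AdjoinRoot.root qK with hρdef
  have hρ : ρ ^ 2 = algebraMap K L (algebraMap P K f) := by
    have h0 : (Polynomial.aeval ρ) qK = 0 := by
      rw [AdjoinRoot.aeval_eq, AdjoinRoot.mk_self]
    have h1 : (Polynomial.aeval ρ) qK = (Polynomial.aeval ρ) (X ^ 2 - C (algebraMap P K f)) :=
      congrArg _ hqK_eq
    rw [h1] at h0
    simpa [sub_eq_zero] using h0
  have halgPL : algebraMap P L = (algebraMap K L).comp (algebraMap P K) := by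
    rfl
  have hq0 : Polynomial.eval₂ ((algebraMap K L).comp (algebraMap P K)) ρ q = 0 := by
    rw [hq]
    simp only [eval₂_sub, eval₂_pow, eval₂_X, eval₂_C]
    rw [hρ]
    exact sub_self _
  set φ : AdjoinRoot q →+* L := AdjoinRoot.lift ((algebraMap K L).comp (algebraMap P K)) ρ hq0
    with hφdef
  letI : Algebra (AdjoinRoot q) L := φ.toAlgebra
  haveI : IsScalarTower P (AdjoinRoot q) L := IsScalarTower.of_algebraMap_eq fun x => by
    show algebraMap P L x = φ (algebraMap P (AdjoinRoot q) x)
    rw [AdjoinRoot.algebraMap_eq, hφdef, AdjoinRoot.lift_of, halgPL]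
  have hφmk : ∀ g : P[X], φ (AdjoinRoot.mk q g) = AdjoinRoot.mk qK (g.map (algebraMap P K)) := by
    have hcomp : φ.comp (AdjoinRoot.mk q) =
        (AdjoinRoot.mk qK).comp (Polynomial.mapRingHom (algebraMap P K)) := by
      apply Polynomial.ringHom_ext
      · intro p
        simp only [RingHom.comp_apply, coe_mapRingHom, Polynomial.map_C]
        rw [show AdjoinRoot.mk q (Polynomial.C p) = AdjoinRoot.of q p from rfl,
          hφdef, AdjoinRoot.lift_of, AdjoinRoot.mk_C]
        rfl
      · simp only [RingHom.comp_apply, coe_mapRingHom, Polynomial.map_X]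
        rw [show AdjoinRoot.mk q Polynomial.X = AdjoinRoot.root q from rfl,
          hφdef, AdjoinRoot.lift_root, AdjoinRoot.mk_X]
    intro g
    have := RingHom.congr_fun hcomp g
    simpa using this
  have hKinj : Function.Injective (algebraMap P K) := IsFractionRing.injective P K
  have hφinj : Function.Injective φ := by
    rw [injective_iff_map_eq_zero]
    intro s hs
    obtain ⟨g, rfl⟩ := AdjoinRoot.mk_surjective s
    rw [hφmk] at hs
    have hdvd : qK ∣ g.map (algebraMap P K) := AdjoinRoot.mk_eq_zero.mp hs
    have hmod : (g %ₘ q).map (algebraMap P K) = 0 := by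
      by_contra hne
      have h1 : qK ∣ (g %ₘ q).map (algebraMap P K) := by
        have h2 : g.map (algebraMap P K) =
            (g %ₘ q).map (algebraMap P K) + qK * (g /ₘ q).map (algebraMap P K) := by
          rw [hqKdef, ← Polynomial.map_mul, ← Polynomial.map_add,
            Polynomial.modByMonic_add_div g q]
        rw [h2] at hdvd
        exact (dvd_add_left (dvd_mul_right qK _)).mp hdvd
      have hlt : ((g %ₘ q).map (algebraMap P K)).degree < qK.degree := by
        calc ((g %ₘ q).map (algebraMap P K)).degree ≤ (g %ₘ q).degree := degree_map_le
        _ < q.degree := degree_modByMonic_lt g hqm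
        _ = qK.degree := (hqm.degree_map _).symm
      exact absurd (Polynomial.degree_le_of_dvd h1 hne) (not_le.mpr hlt)
    have hg : g %ₘ q = 0 := by
      rwa [Polynomial.map_eq_zero_iff hKinj] at hmod
    rw [AdjoinRoot.mk_eq_zero, ← Polynomial.modByMonic_add_div g q, hg, zero_add]
    exact Dvd.intro _ rfl
  -- finiteness
  haveI : Module.Finite P (AdjoinRoot q) := (AdjoinRoot.powerBasis' hqm).finite
  haveI : Algebra.IsIntegral P (AdjoinRoot q) := Algebra.IsIntegral.of_finite P _
  haveI : Module.Finite K L := (AdjoinRoot.powerBasis hqKm.ne_zero).finite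
  haveI : FiniteDimensional K L := inferInstance
  have hKLinj : Function.Injective (algebraMap K L) := (algebraMap K L).injective
  -- linear independence of 1, ρ over K
  have hindep : ∀ u v : K, algebraMap K L u + algebraMap K L v * ρ = 0 → u = 0 ∧ v = 0 := by
    intro u v huv
    have hmk : AdjoinRoot.mk qK (C u + C v * X) = 0 := by
      rw [map_add, map_mul, AdjoinRoot.mk_C, AdjoinRoot.mk_C, AdjoinRoot.mk_X]
      rw [AdjoinRoot.algebraMap_eq] at huv
      exact huv
    have hdvd := AdjoinRoot.mk_eq_zero.mp hmk
    have hzero : C u + C v * X = 0 := by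
      by_contra hne
      have hle := Polynomial.degree_le_of_dvd hdvd hne
      have hle1 : (C u + C v * X).degree ≤ 1 := by
        calc (C u + C v * X).degree ≤ max (C u).degree (C v * X).degree := degree_add_le _ _
        _ ≤ 1 := by
          refine max_le (le_trans degree_C_le (by norm_num)) ?_
          calc (C v * X).degree ≤ (C v).degree + X.degree := degree_mul_le _ _
          _ ≤ 0 + 1 := add_le_add degree_C_le degree_X_le
          _ = 1 := by norm_num
      rw [hqKdeg] at hle
      have := le_trans hle hle1
      norm_num at this
    constructor
    · have := congrArg (fun p => Polynomial.coeff p 0) hzero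
      simpa using this
    · have := congrArg (fun p => Polynomial.coeff p 1) hzero
      simpa using this
  -- the integral closure property
  haveI hIC : IsIntegralClosure (AdjoinRoot q) P L := by
    refine ⟨hφinj, fun {x} => ⟨fun hx => ?_, ?_⟩⟩
    swap
    · rintro ⟨y, rfl⟩
      exact IsIntegral.algebraMap (Algebra.IsIntegral.isIntegral y)
    -- decompose x
    obtain ⟨g, rfl⟩ := AdjoinRoot.mk_surjective x
    set x := AdjoinRoot.mk qK g with hxdef
    set r := g %ₘ qK with hrdef
    have hxr : x = AdjoinRoot.mk qK r := by
      conv_lhs => rw [hxdef, ← Polynomial.modByMonic_add_div g qK]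
      rw [map_add, map_mul, AdjoinRoot.mk_self, zero_mul, add_zero]
    have hrdeg : r.degree ≤ 1 := by
      refine hdeg_le _ ?_
      rw [← hqKdeg]
      exact degree_modByMonic_lt g hqKm
    set c₀ := r.coeff 0 with hc₀def
    set c₁ := r.coeff 1 with hc₁def
    have hxe : x = algebraMap K L c₀ + algebraMap K L c₁ * ρ := by
      conv_lhs => rw [hxr, eq_X_add_C_of_degree_le_one hrdeg]
      rw [map_add, map_mul, AdjoinRoot.mk_C, AdjoinRoot.mk_C, AdjoinRoot.mk_X,
        AdjoinRoot.algebraMap_eq, add_comm]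
    by_cases hc1 : c₁ = 0
    · -- x lies in K
      rw [hc1, map_zero, zero_mul, add_zero] at hxe
      rw [hxe] at hx
      have hc₀int : IsIntegral P c₀ := (isIntegral_algebraMap_iff hKLinj).mp hx
      obtain ⟨p0, hp0⟩ := IsIntegrallyClosed.isIntegral_iff.mp hc₀int
      refine ⟨algebraMap P (AdjoinRoot q) p0, ?_⟩
      rw [← IsScalarTower.algebraMap_apply, IsScalarTower.algebraMap_apply P K L, hp0, hxe]
    · -- genuine quadratic case
      have hxint : IsIntegral K x := hx.tower_top
      set fK := algebraMap P K f with hfKdef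
      set g' : K[X] := X ^ 2 - C (2 * c₀) * X + C (c₀ ^ 2 - c₁ ^ 2 * fK) with hg'def
      have hg'x : (Polynomial.aeval x) g' = 0 := by
        rw [hg'def]
        simp only [map_add, map_sub, map_mul, map_pow, map_ofNat, aeval_X, aeval_C]
        rw [hxe]
        linear_combination ((algebraMap K L c₁) ^ 2) * hρ
      have hg'split : g' = X ^ 2 + (-(C (2 * c₀) * X) + C (c₀ ^ 2 - c₁ ^ 2 * fK)) := by
        rw [hg'def]; ring
      have hlow : (-(C (2 * c₀) * X) + C (c₀ ^ 2 - c₁ ^ 2 * fK)).degree < 2 := by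
        refine lt_of_le_of_lt (degree_add_le _ _) (max_lt ?_ ?_)
        · rw [degree_neg]
          refine lt_of_le_of_lt (degree_mul_le _ _) ?_
          calc (C (2 * c₀)).degree + X.degree ≤ 0 + 1 := add_le_add degree_C_le degree_X_le
          _ < 2 := by norm_num
        · exact lt_of_le_of_lt degree_C_le (by norm_num)
      have hg'm : g'.Monic := by
        rw [hg'split]
        exact monic_X_pow_add (by exact_mod_cast hlow)
      have hg'deg : g'.degree = 2 := by
        rw [hg'split]
        have hlt : ((-(C (2 * c₀) * X) + C (c₀ ^ 2 - c₁ ^ 2 * fK))).degree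
            < (X ^ 2 : K[X]).degree := by
          rw [degree_X_pow]; exact_mod_cast hlow
        rw [degree_add_eq_left_of_degree_lt hlt, degree_X_pow]
        norm_cast
      have hg'nd : g'.natDegree = 2 := natDegree_eq_of_degree_eq_some hg'deg
      -- minpoly K x = g'
      have hmin : minpoly K x = g' := by
        obtain ⟨h', hh'⟩ := minpoly.dvd K x hg'x
        have hmm : (minpoly K x).Monic := minpoly.monic hxint
        have hne' : h' ≠ 0 := by
          intro h0
          rw [h0, mul_zero] at hh'
          exact hg'm.ne_zero hh'
        have hsum : (minpoly K x).natDegree + h'.natDegree = 2 := by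
          rw [← hg'nd, hh', natDegree_mul hmm.ne_zero hne']
        have hpos := minpoly.natDegree_pos hxint
        rcases Nat.lt_or_ge (minpoly K x).natDegree 2 with hlt | hge
        · -- degree 1: contradiction
          exfalso
          have h1 : (minpoly K x).natDegree = 1 := by omega
          have heq := hmm.eq_X_add_C h1
          have haev := minpoly.aeval K x
          rw [heq] at haev
          simp only [map_add, aeval_X, aeval_C] at haev
          have : algebraMap K L (c₀ + (minpoly K x).coeff 0) + algebraMap K L c₁ * ρ = 0 := by
            rw [map_add]
            linear_combination haev - hxe
          exact hc1 (hindep _ _ this).2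
        · have h2d : (minpoly K x).natDegree = 2 := by omega
          have hh'0 : h'.natDegree = 0 := by omega
          obtain ⟨a, rfl⟩ := natDegree_eq_zero.mp hh'0
          have ha : a = 1 := by
            have := congrArg leadingCoeff hh'
            rw [hg'm.leadingCoeff, leadingCoeff_mul, hmm.leadingCoeff, one_mul,
              leadingCoeff_C] at this
            exact this.symm
          rw [ha, map_one, mul_one] at hh'
          exact hh'.symm
      -- minpoly over P
      have hfrac := minpoly.isIntegrallyClosed_eq_field_fractions K L (R := P) (S := L) hx
      rw [show algebraMap L L x = x from rfl] at hfrac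
      rw [hmin] at hfrac
      set m1 := (minpoly P x).coeff 1 with hm1def
      set m0 := (minpoly P x).coeff 0 with hm0def
      have hm1K : algebraMap P K m1 = -(2 * c₀) := by
        have := congrArg (fun p => Polynomial.coeff p 1) hfrac
        simp only [coeff_map] at this
        rw [hg'def] at this
        simp only [coeff_add, coeff_sub, coeff_C_mul, coeff_X_pow, coeff_C, coeff_X] at this
        rw [← this]
        norm_num
      have hm0K : algebraMap P K m0 = c₀ ^ 2 - c₁ ^ 2 * fK := by
        have := congrArg (fun p => Polynomial.coeff p 0) hfrac
        simp only [coeff_map] at this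
        rw [hg'def] at this
        simp only [coeff_add, coeff_sub, coeff_C_mul, coeff_X_pow, coeff_C, coeff_X] at this
        rw [← this]
        norm_num
      -- recover c₀ and c₁
      have h2i := h2.unit.mul_inv
      rw [h2.unit_spec] at h2i
      set i2 : P := ↑h2.unit⁻¹ with hi2def
      have h2K : (2 : K) * algebraMap P K i2 = 1 := by
        rw [show (2 : K) = algebraMap P K 2 by rw [map_ofNat], ← map_mul, h2i, map_one]
      have hc₀ : algebraMap P K (-(i2 * m1)) = c₀ := by
        rw [map_neg, map_mul, hm1K]
        linear_combination c₀ * h2K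
      have hc₁sq : c₁ ^ 2 * algebraMap P K f =
          algebraMap P K ((-(i2 * m1)) ^ 2 - m0) := by
        rw [map_sub, map_pow, hc₀, hm0K, hfKdef]
        ring
      obtain ⟨n, hn⟩ := exists_eq_of_sq_mul_squarefree hsq hc₁sq
      refine ⟨AdjoinRoot.mk q (Polynomial.C (-(i2 * m1)) + Polynomial.C n * Polynomial.X), ?_⟩
      show φ _ = x
      rw [hφmk, Polynomial.map_add, Polynomial.map_mul, Polynomial.map_C, Polynomial.map_C,
        Polynomial.map_X, hc₀, hn, map_add, map_mul, AdjoinRoot.mk_C, AdjoinRoot.mk_C,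
        AdjoinRoot.mk_X, ← AdjoinRoot.algebraMap_eq]
      exact hxe.symm
  -- conclude
  haveI : IsFractionRing (AdjoinRoot q) L :=
    IsIntegralClosure.isFractionRing_of_finite_extension P K L (AdjoinRoot q)
  refine (isIntegrallyClosed_iff L).mpr ?_
  intro x hx
  exact IsIntegralClosure.isIntegral_iff.mp (isIntegral_trans (R := P) x hx)

namespace Aux
open MvPolynomial

variable {R : Type*} [CommRing R]

/-- The ring equivalence `R[x,y] ≃ (R[X])[Y]` sending `x = X 0` to `C X` and `y = X 1` to `X`. -/
noncomputable def toIter : MvPolynomial (Fin 2) R ≃+* Polynomial (Polynomial R) := by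
  refine RingEquiv.ofRingHom
    (MvPolynomial.eval₂Hom ((Polynomial.C).comp (Polynomial.C))
      ![Polynomial.C Polynomial.X, Polynomial.X])
    (Polynomial.eval₂RingHom (Polynomial.eval₂RingHom (MvPolynomial.C) (X 0)) (X 1))
    ?_ ?_
  swap
  · apply MvPolynomial.ringHom_ext
    · intro r
      simp
    · intro i
      fin_cases i <;> simp
  · apply Polynomial.ringHom_ext'
    · apply Polynomial.ringHom_ext'
      · ext r
        simp
      · simp
    · simp

theorem toIter_wRel (A B C' : R) :
    toIter (wRel R A B C') = Polynomial.X ^ 2 -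
      Polynomial.C (Polynomial.X ^ 3 + Polynomial.C A * Polynomial.X ^ 2 +
        Polynomial.C B * Polynomial.X + Polynomial.C C') := by
  simp only [wRel, toIter, RingEquiv.ofRingHom_apply, map_sub, map_pow, map_mul,
    MvPolynomial.eval₂Hom_X', MvPolynomial.eval₂Hom_C, RingHom.coe_comp, Function.comp_apply,
    Matrix.cons_val_zero, Matrix.cons_val_one, Matrix.head_cons]
  rw [map_add, map_add, map_add, map_mul, map_mul, map_pow, map_pow]
  ring

end Aux

end Helpers

open Aux Polynomial in
/-- Let `R` be a discrete valuation ring in which `2` is invertible, `t ∈ R` a uniformizer,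
and `a, b, c ∈ R` such that the discriminant of the Weierstrass curve `y² = x³ + ax² + bx + c`
is a unit in `R`. Then `R[u,v]/(v² − u³ − t²au² − t⁴bu − t⁶c)` is an integral domain which is
integrally closed in its field of fractions. -/
theorem stmt8 (R : Type*) [CommRing R] [IsDomain R] [IsDiscreteValuationRing R]
    (h2 : IsUnit (2 : R)) (t : R) (ht : Ideal.span {t} = IsLocalRing.maximalIdeal R)
    (a b c : R) (hΔ : IsUnit (WeierstrassCurve.mk 0 a 0 b c : WeierstrassCurve R).Δ) :
    IsDomain (MvPolynomial (Fin 2) R ⧸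
      Ideal.span {wRel R (t ^ 2 * a) (t ^ 4 * b) (t ^ 6 * c)}) ∧
    IsIntegrallyClosed (MvPolynomial (Fin 2) R ⧸
      Ideal.span {wRel R (t ^ 2 * a) (t ^ 4 * b) (t ^ 6 * c)}) := by
  classical
  have ht0 : t ≠ 0 := by
    rintro rfl
    exact IsDiscreteValuationRing.not_a_field R
      (ht ▸ Ideal.span_singleton_eq_bot.mpr rfl)
  have hΔ0 : (WeierstrassCurve.mk 0 a 0 b c : WeierstrassCurve R).Δ ≠ 0 := hΔ.ne_zero
  set A := t ^ 2 * a with hA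
  set B := t ^ 4 * b with hB
  set C' := t ^ 6 * c with hC'
  set Pc : Cubic R := ⟨1, A, B, C'⟩ with hPc
  set f : R[X] := Pc.toPoly with hf
  -- discriminant of the scaled cubic
  have hdisc : Pc.discr ≠ 0 := by
    intro h0
    have hid : 16 * Pc.discr = t ^ 12 * (WeierstrassCurve.mk 0 a 0 b c : WeierstrassCurve R).Δ := by
      simp only [hPc, Cubic.discr, WeierstrassCurve.Δ, WeierstrassCurve.b₂, WeierstrassCurve.b₄,
        WeierstrassCurve.b₆, WeierstrassCurve.b₈, hA, hB, hC']
      ring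
    rw [h0, mul_zero] at hid
    exact (mul_ne_zero (pow_ne_zero 12 ht0) hΔ0) hid.symm
  have hsqf : Squarefree f := cubic_squarefree_of_disc_ne_zero Pc rfl hdisc
  have hfmonic : f.Monic := Cubic.monic_of_a_eq_one rfl
  have hfnd : f.natDegree = 3 := Cubic.natDegree_of_a_ne_zero (by rw [hPc]; exact one_ne_zero)
  -- f is not a square over the fraction field: degree parity
  have hns : ∀ u v : R[X], u ^ 2 = f * v ^ 2 → v = 0 := by
    intro u v h
    by_contra hv
    have hu : u ≠ 0 := by
      rintro rfl
      rcases mul_eq_zero.mp ((zero_pow (two_ne_zero)).symm.trans h).symm with h' | h'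
      · exact hfmonic.ne_zero h'
      · exact hv (pow_eq_zero_iff two_ne_zero |>.mp h')
    have := congrArg Polynomial.natDegree h
    rw [Polynomial.natDegree_pow, Polynomial.natDegree_mul hfmonic.ne_zero
      (pow_ne_zero 2 hv), Polynomial.natDegree_pow, hfnd] at this
    omega
  have h2P : IsUnit (2 : R[X]) := by
    have := h2.map (Polynomial.C : R →+* R[X])
    rwa [map_ofNat] at this
  obtain ⟨hdom, hicl⟩ := quad_adjoinRoot h2P f hsqf hns
  -- the explicit form of f
  have hfexp : f = Polynomial.X ^ 3 + Polynomial.C A * Polynomial.X ^ 2 +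
      Polynomial.C B * Polynomial.X + Polynomial.C C' := by
    rw [hf, hPc, Cubic.toPoly]
    simp
  -- transfer along the ring equivalence
  have hew : (toIter (wRel R A B C') : Polynomial (Polynomial R)) =
      Polynomial.X ^ 2 - Polynomial.C f := by
    rw [toIter_wRel, hfexp]
  have hmap : (Ideal.span {wRel R A B C'}).map (toIter : MvPolynomial (Fin 2) R ≃+* _) =
      Ideal.span {(Polynomial.X ^ 2 - Polynomial.C f : Polynomial (Polynomial R))} := by
    rw [Ideal.map_span, Set.image_singleton, hew]
  let eqv : (MvPolynomial (Fin 2) R ⧸ Ideal.span {wRel R A B C'}) ≃+*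
      AdjoinRoot (Polynomial.X ^ 2 - Polynomial.C f : Polynomial (Polynomial R)) :=
    Ideal.quotientEquiv _ _ toIter hmap.symm
  haveI hdomQ : IsDomain (MvPolynomial (Fin 2) R ⧸ Ideal.span {wRel R A B C'}) :=
    Function.Injective.isDomain eqv.toRingHom eqv.injective
  exact ⟨hdomQ, isIntegrallyClosed_of_ringEquiv eqv⟩
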